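/- arXiv:2009.00074 — 2 statements merged into one kernel-verified Lean document; each statement's English description precedes it below -/
import Mathlib

section
/- Let R be a commutative ring, σ : R → R a ring endomorphism, and a ∈ R an element with σ(a) = a. Let f ≥ 1 and c ≥ 0 be integers. Let V₀, V₁, …, V_f be R-modules with V_f = V₀, and for each i = 0, …, f−1 let φᵢ : Vᵢ → V_{i+1} be an additive map that is σ-semilinear, i.e. φᵢ(r·v) = σ(r)·φᵢ(v) for all r ∈ R, v ∈ Vᵢ. Assume that for every i, the submodule a^c·V_{i+1} is contained in the R-submodule of V_{i+1} generated by the image φᵢ(Vᵢ). Then a^{c·f}·V₀ is contained in the R-submodule of V₀ generated by the image of the composite (φ_{f−1} ∘ ⋯ ∘ φ₁ ∘ φ₀)(V₀). -/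
universe u

open Fin.NatCast

section castAux

variable {f : ℕ} {V : Fin f → Type u}

lemma castV_zero [∀ i, AddCommGroup (V i)] {s t : Fin f} (h : s = t) :
    cast (congrArg V h) (0 : V s) = 0 := by subst h; rfl

lemma castV_add [∀ i, AddCommGroup (V i)] {s t : Fin f} (h : s = t) (x y : V s) :
    cast (congrArg V h) (x + y) = cast (congrArg V h) x + cast (congrArg V h) y := by
  subst h; rfl

lemma castV_smul {R : Type*} [CommRing R] [∀ i, AddCommGroup (V i)] [∀ i, Module R (V i)]
    {s t : Fin f} (h : s = t) (r : R) (x : V s) :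
    cast (congrArg V h) (r • x) = r • cast (congrArg V h) x := by subst h; rfl

end castAux

/-- Iterated composite of a cyclic family of maps `φ i : V i → V (i + 1)` indexed by
`Fin f` (indices taken cyclically): `cyclicIter φ n = φ_{n-1} ∘ ⋯ ∘ φ₁ ∘ φ₀ : V 0 → V n`. -/
def cyclicIter {f : ℕ} [NeZero f] {V : Fin f → Type u}
    (φ : ∀ i : Fin f, V i → V (i + 1)) : ∀ n : ℕ, V 0 → V ((n : Fin f))
  | 0 => fun x => cast (congrArg V (by simp)) x
  | n + 1 => fun x =>
      cast (congrArg V (Nat.cast_add_one (R := Fin f) n).symm)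
        (φ ((n : Fin f)) (cyclicIter φ n x))

/-- The full cyclic composite `φ_{f-1} ∘ ⋯ ∘ φ₁ ∘ φ₀ : V 0 → V f = V 0`
(the identification `V f = V 0` being realized by the cyclic indexing `Fin f`). -/
def cyclicComp {f : ℕ} [NeZero f] {V : Fin f → Type u}
    (φ : ∀ i : Fin f, V i → V (i + 1)) : V 0 → V 0 :=
  fun x => cast (congrArg V (Fin.natCast_self f)) (cyclicIter φ f x)

/-- If `φ₀, …, φ_{f-1}` are `σ`-semilinear maps in a cycle `V 0 → V 1 → ⋯ → V f = V 0`
of modules over a commutative ring `R`, `a ∈ R` is fixed by `σ`, and for each `i` the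
submodule `a^c • V (i+1)` is contained in the `R`-span of the image of `φ i`, then
`a^(c·f) • V 0` is contained in the `R`-span of the image of the full composite
`φ_{f-1} ∘ ⋯ ∘ φ₀`. -/
theorem pow_smul_mem_span_range_cyclicComp
    {R : Type*} [CommRing R] (σ : R →+* R) (a : R) (ha : σ a = a)
    (f : ℕ) [NeZero f] (c : ℕ)
    (V : Fin f → Type u) [∀ i, AddCommGroup (V i)] [∀ i, Module R (V i)]
    (φ : ∀ i : Fin f, V i →ₛₗ[σ] V (i + 1))
    (hφ : ∀ i : Fin f, ∀ v : V (i + 1),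
      a ^ c • v ∈ Submodule.span R (Set.range ⇑(φ i)))
    (v : V 0) :
    a ^ (c * f) • v ∈
      Submodule.span R (Set.range (cyclicComp (fun i => ⇑(φ i)))) := by
  have key : ∀ n : ℕ, ∀ w : V ((n : Fin f)),
      a ^ (c * n) • w ∈ Submodule.span R (Set.range (cyclicIter (fun i => ⇑(φ i)) n)) := by
    intro n
    induction n with
    | zero =>
      intro w
      simp only [Nat.mul_zero, pow_zero, one_smul]
      refine Submodule.subset_span ⟨cast (congrArg V (by simp : ((0 : ℕ) : Fin f) = 0)) w, ?_⟩
      simp [cyclicIter]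
    | succ n ih =>
      intro w
      have e : ((n : Fin f) + 1) = (((n + 1 : ℕ)) : Fin f) :=
        (Nat.cast_add_one (R := Fin f) n).symm
      set w' : V ((n : Fin f) + 1) := cast (congrArg V e.symm) w with hw'
      have hmem := hφ (n : Fin f) w'
      have step : ∀ y ∈ Submodule.span R (Set.range (cyclicIter (fun i => ⇑(φ i)) n)),
          cast (congrArg V e) (φ (n : Fin f) y) ∈
            Submodule.span R (Set.range (cyclicIter (fun i => ⇑(φ i)) (n + 1))) := by
        intro y hy
        induction hy using Submodule.span_induction with
        | mem x hx =>
          obtain ⟨z, rfl⟩ := hx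
          exact Submodule.subset_span ⟨z, rfl⟩
        | zero => simp [castV_zero]
        | add x y _ _ hx hy =>
          rw [map_add, castV_add e]; exact add_mem hx hy
        | smul r x _ hx =>
          rw [map_smulₛₗ, castV_smul e]; exact Submodule.smul_mem _ _ hx
      have main : ∀ x ∈ Submodule.span R (Set.range ⇑(φ (n : Fin f))),
          cast (congrArg V e) (a ^ (c * n) • x) ∈
            Submodule.span R (Set.range (cyclicIter (fun i => ⇑(φ i)) (n + 1))) := by
        intro x hx
        induction hx using Submodule.span_induction with
        | mem x hx =>
          obtain ⟨u, rfl⟩ := hx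
          have hco : a ^ (c * n) • (φ (n : Fin f)) u = (φ (n : Fin f)) (a ^ (c * n) • u) := by
            rw [map_smulₛₗ, map_pow, ha]
          rw [hco]
          exact step _ (ih _)
        | zero => simp [castV_zero]
        | add x y _ _ hx hy =>
          rw [smul_add, castV_add e]; exact add_mem hx hy
        | smul r x _ hx =>
          rw [smul_comm, castV_smul e]; exact Submodule.smul_mem _ _ hx
      have hweq : a ^ (c * (n + 1)) • w = cast (congrArg V e) (a ^ (c * n) • a ^ c • w') := by
        rw [castV_smul e, castV_smul e]
        have hcc : cast (congrArg V e) w' = w := by simp [hw']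
        rw [hcc, smul_smul, ← pow_add, Nat.mul_succ]
      rw [hweq]
      exact main _ hmem
  have h0 : ((f : ℕ) : Fin f) = (0 : Fin f) := Fin.natCast_self f
  have hk := key f (cast (congrArg V h0.symm) v)
  have hmap : ∀ x ∈ Submodule.span R (Set.range (cyclicIter (fun i => ⇑(φ i)) f)),
      cast (congrArg V h0) x ∈
        Submodule.span R (Set.range (cyclicComp (fun i => ⇑(φ i)))) := by
    intro x hx
    induction hx using Submodule.span_induction with
    | mem x hx =>
      obtain ⟨z, rfl⟩ := hx
      exact Submodule.subset_span ⟨z, rfl⟩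
    | zero => simp [castV_zero]
    | add x y _ _ hx hy =>
      rw [castV_add h0]; exact add_mem hx hy
    | smul r x _ hx =>
      rw [castV_smul h0]; exact Submodule.smul_mem _ _ hx
  have h := hmap _ hk
  rw [castV_smul h0] at h
  simpa using h
end

section
/- Let R be a discrete valuation ring with fraction field F, uniformizer π, and normalized additive valuation v (so v(π) = 1). Let r, f ≥ 1 and c ≥ 0 be integers. Let A₀, …, A_{f−1} be r × r matrices with entries in R satisfying π^c·R^r ⊆ Aᵢ·R^r for every i. Suppose λ₀, …, λ_{f−1} are nonzero elements of F for which there exist R-lattices L₀, L₁, …, L_f in F^r with L_f = L₀ (each Lᵢ a finitely generated R-submodule of F^r spanning F^r over F) such that (λᵢAᵢ)(Lᵢ) ⊆ L_{i+1} and π^c·L_{i+1} ⊆ (λᵢAᵢ)(Lᵢ) for every i. Then −c·f ≤ v(λ₀) + v(λ₁) + ⋯ + v(λ_{f−1}) ≤ c·f. -/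
open Finset Matrix
open Fin.NatCast

private def chainProd {R : Type*} [CommRing R] {r f : ℕ} [NeZero f]
    (A : Fin f → Matrix (Fin r) (Fin r) R) : ℕ → Matrix (Fin r) (Fin r) R
  | 0 => 1
  | n + 1 => A (n : Fin f) * chainProd A n

private lemma zpow_unit_inj {R F : Type*} [CommRing R] [IsDomain R]
    [Field F] [Algebra R F] [IsFractionRing R F]
    {π : R} (hπ : Irreducible π) {m n : ℤ} {u v : Rˣ}
    (h : (algebraMap R F π) ^ m * algebraMap R F (u : R)
        = (algebraMap R F π) ^ n * algebraMap R F (v : R)) : m = n := by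
  have hφinj : Function.Injective (algebraMap R F) := IsFractionRing.injective R F
  have hπ0 : (algebraMap R F π) ≠ 0 := fun h0 => hπ.ne_zero (hφinj (by simpa using h0))
  have key : ∀ (m n : ℤ) (u v : Rˣ), m ≤ n →
      (algebraMap R F π) ^ m * algebraMap R F (u : R)
        = (algebraMap R F π) ^ n * algebraMap R F (v : R) → m = n := by
    intro m n u v hmn h
    set φ := algebraMap R F
    set d : ℕ := (n - m).toNat with hd
    have hdn : (d : ℤ) = n - m := Int.toNat_of_nonneg (by omega)
    have hpows : (φ π) ^ n = (φ π) ^ m * (φ π) ^ (d : ℤ) := by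
      rw [← zpow_add₀ hπ0]; congr 1; omega
    have h2 : φ (u : R) = (φ π) ^ (d : ℤ) * φ (v : R) := by
      have hm0 : (φ π) ^ m ≠ 0 := zpow_ne_zero _ hπ0
      rw [hpows, mul_assoc] at h
      exact mul_left_cancel₀ hm0 h
    have h3 : (u : R) = π ^ d * (v : R) := by
      apply hφinj
      rw [_root_.map_mul, map_pow, h2, zpow_natCast]
    have hunit : IsUnit (π ^ d) := isUnit_of_mul_isUnit_left (h3 ▸ u.isUnit)
    have hd0 : d = 0 := by
      by_contra hd0
      exact hπ.not_isUnit (isUnit_of_dvd_unit (dvd_pow_self π hd0) hunit)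
    omega
  rcases le_total m n with h' | h'
  · exact key m n u v h' h
  · exact (key n m v u h' h.symm).symm

/-- Claim 1 of the lemma on twists of F-crystals. Let `R` be a discrete valuation ring
with fraction field `F` and uniformizer `π`. Let `A₀, …, A_{f-1}` be `r × r` matrices
over `R` with `π^c • R^r ⊆ Aᵢ • R^r`, and let `λ₀, …, λ_{f-1} ∈ Fˣ` be such that there
are `R`-lattices `L₀, …, L_f = L₀` in `F^r` (indexed cyclically by `Fin f`) with
`(λᵢ Aᵢ)(Lᵢ) ⊆ L_{i+1}` and `π^c • L_{i+1} ⊆ (λᵢ Aᵢ)(Lᵢ)` for every `i`. Then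
`-c·f ≤ v(λ₀) + ⋯ + v(λ_{f-1}) ≤ c·f`, expressed as: `∏ᵢ λᵢ = u * π^k` for a unit
`u ∈ Rˣ` and an integer `k` with `-c·f ≤ k ≤ c·f`. -/
theorem sum_val_le_of_lattice_chain
    {R F : Type*} [CommRing R] [IsDomain R] [IsDiscreteValuationRing R]
    [Field F] [Algebra R F] [IsFractionRing R F]
    (π : R) (hπ : Irreducible π)
    (r f : ℕ) (hr : 1 ≤ r) [NeZero f] (c : ℕ)
    (A : Fin f → Matrix (Fin r) (Fin r) R)
    (hA : ∀ i, ∀ x : Fin r → R, ∃ y : Fin r → R, (A i).mulVec y = π ^ c • x)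
    (lam : Fin f → F) (hlam : ∀ i, lam i ≠ 0)
    (L : Fin f → Submodule R (Fin r → F))
    (hfg : ∀ i, (L i).FG)
    (hspan : ∀ i, Submodule.span F ((L i : Set (Fin r → F))) = ⊤)
    (hmap : ∀ i, ∀ x ∈ L i,
      lam i • ((A i).map (algebraMap R F)).mulVec x ∈ L (i + 1))
    (hdiv : ∀ i, ∀ y ∈ L (i + 1), ∃ x ∈ L i,
      lam i • ((A i).map (algebraMap R F)).mulVec x = algebraMap R F (π ^ c) • y) :
    ∃ (k : ℤ) (u : Rˣ), -(c * f : ℤ) ≤ k ∧ k ≤ (c * f : ℤ) ∧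
      (∏ i, lam i) = algebraMap R F u * (algebraMap R F π) ^ k := by
  classical
  set φ := algebraMap R F with hφdef
  have hφinj : Function.Injective φ := IsFractionRing.injective R F
  have hπF : φ π ≠ 0 := fun h0 => hπ.ne_zero (hφinj (by simpa using h0))
  set V := Fin r → F
  set Bp : ℕ → Matrix (Fin r) (Fin r) R := chainProd A with hBp
  -- Step 1: going up the chain
  have key1 : ∀ n : ℕ, ∀ x ∈ L 0,
      (∏ i ∈ range n, lam (i : Fin f)) • ((Bp n).map φ).mulVec x ∈ L (n : Fin f) := by
    intro n
    induction n with
    | zero =>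
      intro x hx
      simpa [hBp, chainProd, Matrix.map_one] using hx
    | succ n ih =>
      intro x hx
      have h1 := hmap (n : Fin f) _ (ih x hx)
      have hcast : ((n + 1 : ℕ) : Fin f) = (n : Fin f) + 1 := by push_cast; ring
      rw [hcast]
      have heq : (∏ i ∈ range (n+1), lam (i : Fin f)) • ((Bp (n+1)).map φ).mulVec x
          = lam (n : Fin f) •
            ((A (n : Fin f)).map φ).mulVec
              ((∏ i ∈ range n, lam (i : Fin f)) • ((Bp n).map φ).mulVec x) := by
        rw [Matrix.mulVec_smul, Matrix.mulVec_mulVec, smul_smul, prod_range_succ, mul_comm]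
        show _ = _ • ((A (n : Fin f)).map φ * (Bp n).map φ).mulVec x
        rw [← Matrix.map_mul]
        rfl
      rw [heq]
      exact h1
  -- Step 2: going down the chain
  have key2 : ∀ n : ℕ, ∀ y ∈ L (n : Fin f), ∃ x ∈ L 0,
      (∏ i ∈ range n, lam (i : Fin f)) • ((Bp n).map φ).mulVec x = (φ π) ^ (c * n) • y := by
    intro n
    induction n with
    | zero =>
      intro y hy
      refine ⟨y, by simpa using hy, ?_⟩
      simp [hBp, chainProd, Matrix.map_one]
    | succ n ih =>
      intro y hy
      have hcast : ((n + 1 : ℕ) : Fin f) = (n : Fin f) + 1 := by push_cast; ring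
      rw [hcast] at hy
      obtain ⟨x', hx', hx'eq⟩ := hdiv (n : Fin f) y hy
      obtain ⟨x, hx, hxeq⟩ := ih x' hx'
      refine ⟨x, hx, ?_⟩
      have heq : (∏ i ∈ range (n+1), lam (i : Fin f)) • ((Bp (n+1)).map φ).mulVec x
          = lam (n : Fin f) •
            ((A (n : Fin f)).map φ).mulVec
              ((∏ i ∈ range n, lam (i : Fin f)) • ((Bp n).map φ).mulVec x) := by
        rw [Matrix.mulVec_smul, Matrix.mulVec_mulVec, smul_smul, prod_range_succ, mul_comm]
        show _ = _ • ((A (n : Fin f)).map φ * (Bp n).map φ).mulVec x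
        rw [← Matrix.map_mul]
        rfl
      rw [heq, hxeq, Matrix.mulVec_smul, smul_comm, hx'eq, map_pow, smul_smul, ← pow_add]
      have hcn : c * n + c = c * (n + 1) := by ring
      rw [hcn]
  -- specialize to n = f
  set lamP : F := ∏ i, lam i with hlamP
  have hlamP_eq : lamP = ∏ i ∈ range f, lam (i : Fin f) := by
    rw [hlamP, ← Fin.prod_univ_eq_prod_range (fun i => lam (i : Fin f)) f]
    exact Finset.prod_congr rfl fun i _ => by rw [Fin.cast_val_eq_self]
  have hlamP0 : lamP ≠ 0 := Finset.prod_ne_zero_iff.mpr fun i _ => hlam i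
  have hff : ((f : ℕ) : Fin f) = 0 := Fin.natCast_self f
  set B : Matrix (Fin r) (Fin r) R := Bp f with hB
  set T : V →ₗ[F] V := lamP • Matrix.toLin' (B.map φ) with hT
  have hTapply : ∀ x : V, T x = lamP • (B.map φ).mulVec x := by
    intro x
    rw [hT]
    simp only [LinearMap.smul_apply]
    rw [Matrix.toLin'_apply]
  have hT1 : ∀ x ∈ L 0, T x ∈ L 0 := by
    intro x hx
    have := key1 f x hx
    rw [hff] at this
    rw [hTapply, hlamP_eq]
    exact this
  have hT2 : ∀ y ∈ L 0, ∃ x ∈ L 0, T x = (φ π) ^ (c * f) • y := by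
    intro y hy
    obtain ⟨x, hx, hxeq⟩ := key2 f y (by rwa [hff])
    exact ⟨x, hx, by rw [hTapply, hlamP_eq]; exact hxeq⟩
  -- determinant of T
  have hfinrank : Module.finrank F V = r := by
    rw [Module.finrank_pi]; simp
  have hdetT : LinearMap.det T = lamP ^ r * φ B.det := by
    rw [hT, LinearMap.det_smul, hfinrank, LinearMap.det_toLin', RingHom.map_det]
    rfl
  -- divisibility of det B
  have hdetA : ∀ i : Fin f, (A i).det ∣ π ^ (c * r) := by
    intro i
    choose y hy using hA i
    set Y : Matrix (Fin r) (Fin r) R := Matrix.of fun a b => y (Pi.single b 1) a with hY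
    have hAY : A i * Y = (π ^ c) • (1 : Matrix (Fin r) (Fin r) R) := by
      ext a b
      have h1 := congrFun (hy (Pi.single b 1)) a
      simp only [Matrix.mulVec, dotProduct, Pi.smul_apply] at h1
      rw [Matrix.mul_apply]
      show (∑ j, A i a j * y (Pi.single b 1) j) = _
      rw [h1, Matrix.smul_apply, Matrix.one_apply, Pi.single_apply]
    have := congrArg Matrix.det hAY
    rw [Matrix.det_mul, Matrix.det_smul, Matrix.det_one, Fintype.card_fin, mul_one,
      ← pow_mul] at this
    exact ⟨Y.det, this.symm⟩
  have hdetB : B.det ∣ π ^ (c * r * f) := by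
    rw [hB]
    have : ∀ n : ℕ, (Bp n).det ∣ π ^ (c * r * n) := by
      intro n
      induction n with
      | zero => simp [hBp, chainProd]
      | succ n ih =>
        have : Bp (n + 1) = A (n : Fin f) * Bp n := rfl
        rw [this, Matrix.det_mul]
        calc (A (n:Fin f)).det * (Bp n).det ∣ π ^ (c*r) * π ^ (c*r*n) :=
              mul_dvd_mul (hdetA _) ih
          _ = π ^ (c*r*(n+1)) := by rw [← pow_add]; ring_nf
    exact this f
  -- build the basis of L 0
  haveI : Module.Finite R (L 0) := Module.Finite.iff_fg.mpr (hfg 0)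
  haveI : NoZeroSMulDivisors R F := ⟨fun {a x} h => by
    rw [Algebra.smul_def] at h
    rcases mul_eq_zero.mp h with h | h
    · exact Or.inl ((map_eq_zero_iff _ hφinj).mp h)
    · exact Or.inr h⟩
  haveI : NoZeroSMulDivisors R V := by
    constructor
    intro a x hax
    by_cases ha : a = 0
    · exact Or.inl ha
    · right
      funext i
      have : a • x i = 0 := congrFun hax i
      rcases smul_eq_zero.mp this with h | h
      · exact absurd h ha
      · exact h
  haveI : NoZeroSMulDivisors R (L 0) := by
    constructor
    intro a x hax
    have h0 : ((a • x : L 0) : V) = 0 := by rw [hax]; rfl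
    rw [Submodule.coe_smul] at h0
    rcases smul_eq_zero.mp h0 with h | h
    · exact Or.inl h
    · exact Or.inr (Subtype.ext h)
  haveI : Module.Free R (L 0) := Module.free_of_finite_type_torsion_free'
  set ι := Module.Free.ChooseBasisIndex R (L 0) with hι
  set b0 : Module.Basis ι R (L 0) := Module.Free.chooseBasis R (L 0) with hb0
  set v : ι → V := fun i => ((b0 i : L 0) : V) with hv
  have hvli_R : LinearIndependent R v := by
    have := b0.linearIndependent.map' (L 0).subtype (Submodule.ker_subtype _)
    exact this
  have hvli : LinearIndependent F v := (LinearIndependent.iff_fractionRing R F).mp hvli_R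
  have hspanRv : Submodule.span R (Set.range v) = L 0 := by
    have h1 : Set.range v = (L 0).subtype '' Set.range b0 := by
      rw [← Set.range_comp]; rfl
    rw [h1, ← Submodule.map_span, b0.span_eq, Submodule.map_subtype_top]
  have hvspan : ⊤ ≤ Submodule.span F (Set.range v) := by
    rw [← hspan 0]
    apply Submodule.span_le.mpr
    intro x hx
    have hx' : x ∈ Submodule.span R (Set.range v) := hspanRv ▸ hx
    exact Submodule.span_le_restrictScalars R F (Set.range v) hx'
  set bι : Module.Basis ι F V := Module.Basis.mk hvli hvspan with hbι
  have : Fintype ι := Module.Free.ChooseBasisIndex.fintype R (L 0)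
  set e : ι ≃ Fin r := bι.indexEquiv (Pi.basisFun F (Fin r)) with he
  set bF : Module.Basis (Fin r) F V := bι.reindex e with hbF
  set bR : Module.Basis (Fin r) R (L 0) := b0.reindex e with hbR
  have hbFR : ∀ j, ((bR j : L 0) : V) = bF j := by
    intro j
    rw [hbF, hbR, Module.Basis.reindex_apply, Module.Basis.reindex_apply, hbι, Module.Basis.mk_apply]
  have hbFmem : ∀ j, bF j ∈ L 0 := fun j => hbFR j ▸ (bR j).2
  -- coordinates of elements of L 0
  have hcoord : ∀ x ∈ L 0, ∃ cf : Fin r → R, x = ∑ j, cf j • bF j := by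
    intro x hx
    refine ⟨fun j => bR.repr ⟨x, hx⟩ j, ?_⟩
    have := bR.sum_repr ⟨x, hx⟩
    have h2 := congrArg ((L 0).subtype) this
    rw [map_sum] at h2
    simp only [Submodule.coe_subtype, SetLike.val_smul] at h2
    calc x = ∑ j, (bR.repr ⟨x, hx⟩) j • ((bR j : L 0) : Fin r → F) := h2.symm
      _ = ∑ j, (bR.repr ⟨x, hx⟩) j • bF j :=
          Finset.sum_congr rfl fun j _ => by rw [hbFR j]
  have hrepr : ∀ (cf : Fin r → R) (i : Fin r),
      bF.repr (∑ j, cf j • bF j) i = φ (cf i) := by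
    intro cf i
    have : (∑ j, cf j • bF j) = ∑ j, (φ (cf j)) • bF j := by
      exact Finset.sum_congr rfl fun j _ => by rw [algebraMap_smul]
    rw [this, Module.Basis.repr_sum_self]
  have hcoordφ : ∀ x ∈ L 0, ∀ i, ∃ a : R, φ a = bF.repr x i := by
    intro x hx i
    obtain ⟨cf, hcf⟩ := hcoord x hx
    exact ⟨cf i, by rw [hcf, hrepr]⟩
  -- matrix of T
  set C : Matrix (Fin r) (Fin r) F := LinearMap.toMatrix bF bF T with hC
  have hCint : ∀ i j, ∃ a : R, φ a = C i j := by
    intro i j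
    rw [hC, LinearMap.toMatrix_apply]
    exact hcoordφ _ (hT1 _ (hbFmem j)) i
  choose C0 hC0 using fun i => fun j => hCint i j
  have hC0map : (Matrix.of C0).map φ = C := by
    ext i j; exact hC0 i j
  -- the divisor matrix
  choose xv hxvmem hxveq using fun j => hT2 (bF j) (hbFmem j)
  choose d hd using fun j => hcoord (xv j) (hxvmem j)
  set S : V →ₗ[F] V := bF.constr F xv with hS
  have hSmat : LinearMap.toMatrix bF bF S = (Matrix.of fun i j => d j i).map φ := by
    ext i j
    rw [LinearMap.toMatrix_apply, hS, Module.Basis.constr_basis, hd j, hrepr]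
    rfl
  have hTS : T ∘ₗ S = ((φ π) ^ (c * f)) • LinearMap.id := by
    apply bF.ext
    intro j
    rw [LinearMap.comp_apply, hS, Module.Basis.constr_basis, hxveq j]
    simp
  have hmatTS : C * LinearMap.toMatrix bF bF S = ((φ π) ^ (c * f)) • 1 := by
    rw [hC, ← LinearMap.toMatrix_comp bF bF bF, hTS, _root_.map_smul, LinearMap.toMatrix_id]
  have hdetCD : C.det * ((Matrix.of fun i j => d j i).map φ).det = (φ π) ^ (c * f * r) := by
    have := congrArg Matrix.det hmatTS
    rw [Matrix.det_mul, Matrix.det_smul, Matrix.det_one, Fintype.card_fin, mul_one,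
      ← pow_mul, hSmat] at this
    exact this
  -- transfer to R
  set D0 : Matrix (Fin r) (Fin r) R := Matrix.of fun i j => d j i with hD0
  have hdetC : C.det = φ (Matrix.of C0).det := by rw [← hC0map, RingHom.map_det]; rfl
  have hdetD : (D0.map φ).det = φ D0.det := by rw [RingHom.map_det]; rfl
  have hCDR : (Matrix.of C0).det * D0.det = π ^ (c * f * r) := by
    apply hφinj
    rw [_root_.map_mul, map_pow, ← hdetC, ← hdetD]
    exact hdetCD
  -- det C = det T
  have hdetC_T : φ (Matrix.of C0).det = lamP ^ r * φ B.det := by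
    rw [← hdetC, hC, LinearMap.det_toMatrix, hdetT]
  -- nonvanishing
  have hπ0 : π ≠ 0 := hπ.ne_zero
  have hpow0 : π ^ (c * f * r) ≠ 0 := pow_ne_zero _ hπ0
  have hdetC0ne : (Matrix.of C0).det ≠ 0 := by
    intro h
    apply hpow0
    rw [← hCDR, h, zero_mul]
  have hdetBne : B.det ≠ 0 := by
    intro h
    apply hdetC0ne
    apply hφinj
    simp [hdetC_T, h]
  -- valuation extraction
  obtain ⟨a, u₁, hu₁⟩ := IsDiscreteValuationRing.eq_unit_mul_pow_irreducible hdetC0ne hπ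
  obtain ⟨b, u₂, hu₂⟩ := IsDiscreteValuationRing.eq_unit_mul_pow_irreducible hdetBne hπ
  have ha_le : a ≤ c * f * r := by
    have hdvd : π ^ a ∣ π ^ (c * f * r) := by
      refine dvd_trans ⟨(u₁ : R), by rw [hu₁]; ring⟩ ⟨D0.det, hCDR.symm⟩
    exact (pow_dvd_pow_iff hπ0 hπ.not_isUnit).mp hdvd
  have hb_le : b ≤ c * f * r := by
    have hdvd : π ^ b ∣ π ^ (c * r * f) := by
      refine dvd_trans ⟨(u₂ : R), by rw [hu₂]; ring⟩ hdetB
    have h2 := (pow_dvd_pow_iff hπ0 hπ.not_isUnit).mp hdvd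
    have h3 : c * r * f = c * f * r := by ring
    omega
  -- write lamP = unit * π^k
  obtain ⟨s, t, ht, hst⟩ := IsFractionRing.div_surjective (A := R) lamP
  have ht0 : t ≠ 0 := nonZeroDivisors.ne_zero ht
  have hs0 : s ≠ 0 := by
    intro h
    apply hlamP0
    rw [← hst, h, map_zero, zero_div]
  obtain ⟨ns, us, hus⟩ := IsDiscreteValuationRing.eq_unit_mul_pow_irreducible hs0 hπ
  obtain ⟨nt, ut, hut⟩ := IsDiscreteValuationRing.eq_unit_mul_pow_irreducible ht0 hπ
  set w : Rˣ := us * ut⁻¹ with hw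
  set k : ℤ := (ns : ℤ) - nt with hk
  have hutF : φ ((ut⁻¹ : Rˣ) : R) = (φ ((ut : Rˣ) : R))⁻¹ := by
    apply eq_inv_of_mul_eq_one_left
    rw [← _root_.map_mul]
    simp
  have hutne : φ ((ut : Rˣ) : R) ≠ 0 := fun h0 => ut.ne_zero (hφinj (by simpa using h0))
  have hlamPk : lamP = φ (w : R) * (φ π) ^ k := by
    have hsF : φ s = φ ((us : Rˣ) : R) * (φ π) ^ ns := by rw [hus, _root_.map_mul, map_pow]
    have htF : φ t = φ ((ut : Rˣ) : R) * (φ π) ^ nt := by rw [hut, _root_.map_mul, map_pow]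
    have hwF : φ (w : R) = φ ((us : Rˣ) : R) * (φ ((ut : Rˣ) : R))⁻¹ := by
      rw [hw, Units.val_mul, _root_.map_mul, hutF]
    rw [← hst, hsF, htF, hwF, hk, zpow_sub₀ hπF, zpow_natCast, zpow_natCast]
    field_simp
  -- compare exponents
  have hcompare : (a : ℤ) = k * r + b := by
    have hmain : (φ π) ^ (a : ℤ) * φ ((u₁ : Rˣ) : R)
        = (φ π) ^ (k * r + (b : ℤ)) * φ (((w ^ r * u₂ : Rˣ) : Rˣ) : R) := by
      have h1 : φ (Matrix.of C0).det = (φ π) ^ (a : ℤ) * φ ((u₁ : Rˣ) : R) := by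
        rw [hu₁, _root_.map_mul, map_pow, zpow_natCast]; ring
      have h2 : lamP ^ r * φ B.det
          = (φ π) ^ (k * r + (b : ℤ)) * φ (((w ^ r * u₂ : Rˣ) : Rˣ) : R) := by
        rw [hlamPk, hu₂]
        simp only [Units.val_mul, Units.val_pow_eq_pow_val, _root_.map_mul, map_pow]
        rw [mul_pow, ← zpow_natCast (φ π) b, ← zpow_natCast ((φ π) ^ k) r, ← _root_.zpow_mul,
          zpow_add₀ hπF]
        ring
      rw [← h1, ← h2]
      exact hdetC_T
    exact zpow_unit_inj hπ hmain
  -- conclude bounds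
  have hkr_le : k * r ≤ (c : ℤ) * f * r := by
    have : (a : ℤ) ≤ (c : ℤ) * f * r := by exact_mod_cast ha_le
    omega
  have hkr_ge : -( (c : ℤ) * f * r) ≤ k * r := by
    have hb' : (b : ℤ) ≤ (c : ℤ) * f * r := by exact_mod_cast hb_le
    omega
  have hr' : (0 : ℤ) < r := by exact_mod_cast hr
  have hk_le : k ≤ (c : ℤ) * f := by
    by_contra hlt
    push_neg at hlt
    have : ((c : ℤ) * f) * r < k * r := by
      exact mul_lt_mul_of_pos_right hlt hr'
    omega
  have hk_ge : -((c : ℤ) * f) ≤ k := by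
    by_contra hlt
    push_neg at hlt
    have : k * r < (-((c : ℤ) * f)) * r := mul_lt_mul_of_pos_right hlt hr'
    have h2 : (-((c : ℤ) * f)) * r = -((c:ℤ) * f * r) := by ring
    omega
  exact ⟨k, w, by omega, by omega, hlamPk⟩
end
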